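/- Let p be a prime, G a finite p-group, and S = Z(G) ∩ P(G). Then the exponent of the group Aut_S(G) is at most p^{min{r,s}}, where exp(G/[G,G]) = p^r and exp(Z(G)) = p^s. -/

import Mathlib

/-- `P(G)`: the subgroup `γ₂(G)·G^p` for odd `p`, and `γ₂(G)·G⁴` for `p = 2`, where `G^m` is the
subgroup generated by `m`-th powers. -/
def groupP (p : ℕ) (G : Type*) [Group G] : Subgroup G :=
  commutator G ⊔ Subgroup.closure {x : G | ∃ g : G, g ^ (if p = 2 then 4 else p) = x}

/-- `Aut_N(G)`: the group of automorphisms `u` of `G` such that `x⁻¹ · u x ∈ N` for all `x`. -/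
def autSub {G : Type*} [Group G] (N : Subgroup G) : Subgroup (G ≃* G) where
  carrier := {u : G ≃* G | ∀ x : G, x⁻¹ * u x ∈ N}
  one_mem' := by
    intro x
    simpa using N.one_mem
  mul_mem' := by
    intro u v hu hv x
    have h := N.mul_mem (hv x) (hu (v x))
    simpa [MulAut.mul_apply, mul_assoc] using h
  inv_mem' := by
    intro u hu x
    have h := N.inv_mem (hu (u⁻¹ x))
    have hx : u (u⁻¹ x) = x := by
      simp [MulAut.inv_def]
    rw [hx] at h
    simpa [mul_inv_rev] using h

open scoped IsMulCommutative

/-- Iterates of an endomorphism, bundled as monoid homs. -/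
private def psiIter {G : Type*} [Group G] (φ : G →* G) : ℕ → G →* G
  | 0 => MonoidHom.id G
  | (k+1) => φ.comp (psiIter φ k)

private lemma psiIter_succ_apply {G : Type*} [Group G] (φ : G →* G) (k : ℕ) (x : G) :
    psiIter φ (k+1) x = φ (psiIter φ k x) := rfl

private lemma psiIter_comm {G : Type*} [Group G] (φ : G →* G) (k : ℕ) (x : G) :
    psiIter φ k (φ x) = psiIter φ (k+1) x := by
  induction k with
  | zero => rfl
  | succ k ih =>
      rw [psiIter_succ_apply, ih, psiIter_succ_apply]
      rfl

/-- Key number-theoretic fact: `p ^ (m - (k-1))` divides `C(p^m, k)` for `k ≥ 1`. -/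
private lemma nt_pow_dvd_choose {p : ℕ} (hp : p.Prime) (m k : ℕ) (hk : 1 ≤ k) :
    p ^ (m - (k - 1)) ∣ Nat.choose (p ^ m) k := by
  rcases lt_or_ge (p ^ m) k with hlt | hle
  · rw [Nat.choose_eq_zero_of_lt hlt]; exact dvd_zero _
  set b := (Nat.factorization k) p with hbdef
  have hk0 : k ≠ 0 := by omega
  have hbdvd : p ^ b ∣ k := Nat.ordProj_dvd k p
  have hbk : b ≤ k - 1 := by
    have h1 : b < p ^ b := Nat.lt_pow_self (n := b) hp.one_lt
    have h2 : p ^ b ≤ k := Nat.le_of_dvd (by omega) hbdvd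
    omega
  refine dvd_trans (pow_dvd_pow p (Nat.sub_le_sub_left hbk m)) ?_
  -- key identity : p ^ m ∣ k * choose (p^m) k
  have key : p ^ m ∣ k * Nat.choose (p ^ m) k := by
    obtain ⟨n, hn⟩ : ∃ n, p ^ m = n + 1 :=
      ⟨p ^ m - 1, (Nat.succ_pred_eq_of_pos (pow_pos hp.pos m)).symm⟩
    obtain ⟨j, hj⟩ : ∃ j, k = j + 1 := ⟨k - 1, by omega⟩
    refine ⟨Nat.choose n j, ?_⟩
    rw [hn, hj, mul_comm (j+1), Nat.add_one_mul_choose_eq]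
  rcases le_or_gt b m with hbm | hbm
  · -- cancel p ^ b
    have hkeq : p ^ b * (k / p ^ b) = k := Nat.ordProj_mul_ordCompl_eq_self k p
    have key2 : p ^ (m - b) * p ^ b ∣ p ^ b * ((k / p ^ b) * Nat.choose (p ^ m) k) := by
      rw [← pow_add, Nat.sub_add_cancel hbm, ← mul_assoc, hkeq]
      exact key
    rw [mul_comm (p ^ (m - b)) (p ^ b)] at key2
    have key3 : p ^ (m - b) ∣ (k / p ^ b) * Nat.choose (p ^ m) k :=
      (Nat.mul_dvd_mul_iff_left (pow_pos hp.pos b)).mp key2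
    have hcop : Nat.Coprime (p ^ (m - b)) (k / p ^ b) :=
      Nat.Coprime.pow_left _ (Nat.coprime_ordCompl hp hk0)
    exact hcop.dvd_of_dvd_mul_left key3
  · have : m - b = 0 := by omega
    rw [this, pow_zero]
    exact one_dvd _

section Main

variable {G : Type*} [Group G]

/-- The descent step: if all values of `ψ = φ^{k+1}` have order dividing `p^c`, then values
of `ψ` on `P(G)` have order dividing `p^(c-1)`. -/
private lemma descent {p : ℕ} (hp : p.Prime) (φ : G →* G)
    (hc : ∀ x : G, φ x ∈ Subgroup.center G) (k c : ℕ)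
    (h : ∀ g : G, (psiIter φ (k+1) g) ^ (p ^ c) = 1) :
    ∀ y ∈ groupP p G, (psiIter φ (k+1) y) ^ (p ^ (c - 1)) = 1 := by
  have hck : ∀ z : G, psiIter φ (k+1) z ∈ Subgroup.center G := fun z => hc _
  set χ : G →* Subgroup.center G := (psiIter φ (k+1)).codRestrict _ hck with hχ
  set K : Subgroup G := ((powMonoidHom (p ^ (c - 1))).comp χ).ker with hK
  have hmem : ∀ y : G, y ∈ K ↔ (psiIter φ (k+1) y) ^ (p ^ (c - 1)) = 1 := by
    intro y
    rw [hK, MonoidHom.mem_ker, MonoidHom.comp_apply, powMonoidHom_apply, Subtype.ext_iff]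
    push_cast
    rfl
  have hle : groupP p G ≤ K := by
    rw [groupP]
    apply sup_le
    · exact Abelianization.commutator_subset_ker _
    · rw [Subgroup.closure_le]
      rintro _ ⟨g, rfl⟩
      have hz : (psiIter φ (k+1) g) ^ (p ^ c) = 1 := h g
      have hpt : p ∣ (if p = 2 then 4 else p) := by
        by_cases h2 : p = 2
        · subst h2; norm_num
        · simp [h2]
      have hdvd : p ^ c ∣ (if p = 2 then 4 else p) * p ^ (c - 1) := by
        rcases Nat.eq_zero_or_pos c with h0 | h1
        · simp [h0]
        · have : p ^ c = p * p ^ (c - 1) := by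
            rw [← pow_succ']
            congr 1
            omega
          rw [this]
          exact Nat.mul_dvd_mul hpt dvd_rfl
      show _ ∈ K
      rw [hmem, map_pow, ← pow_mul]
      exact orderOf_dvd_iff_pow_eq_one.mp ((orderOf_dvd_of_pow_eq_one hz).trans hdvd)
  intro y hy
  exact (hmem y).mp (hle hy)

private lemma iter_bound {p r s : ℕ} (hp : p.Prime)
    (hr : Monoid.exponent (G ⧸ commutator G) = p ^ r)
    (hs : Monoid.exponent ↥(Subgroup.center G) = p ^ s)
    (φ : G →* G) (hc : ∀ x : G, φ x ∈ Subgroup.center G)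
    (hP : ∀ x : G, φ x ∈ groupP p G) (k : ℕ) :
    ∀ g : G, (psiIter φ (k+1) g) ^ (p ^ (min r s - k)) = 1 := by
  induction k with
  | zero =>
      intro g
      have h1 : (φ g) ^ (p ^ s) = 1 := by
        have h := Monoid.pow_exponent_eq_one (⟨φ g, hc g⟩ : Subgroup.center G)
        rw [hs, Subtype.ext_iff] at h
        exact h
      have h2 : (φ g) ^ (p ^ r) = 1 := by
        have hq : ((g : G ⧸ commutator G)) ^ (p ^ r) = 1 := by
          rw [← hr]; exact Monoid.pow_exponent_eq_one _
        have hmem : g ^ (p ^ r) ∈ commutator G := by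
          rw [← QuotientGroup.eq_one_iff]
          exact_mod_cast hq
        have hker : commutator G ≤ (φ.codRestrict (Subgroup.center G) hc).ker :=
          Abelianization.commutator_subset_ker _
        have := hker hmem
        rw [MonoidHom.mem_ker, Subtype.ext_iff] at this
        push_cast at this
        rw [map_pow] at this
        exact this
      obtain ⟨i, hir, hi⟩ := (Nat.dvd_prime_pow hp).mp (orderOf_dvd_of_pow_eq_one h2)
      have his : i ≤ s := by
        have := hi ▸ orderOf_dvd_of_pow_eq_one h1
        exact (Nat.pow_dvd_pow_iff_le_right hp.one_lt).mp this
      have hdvd : orderOf (φ g) ∣ p ^ (min r s - 0) := by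
        rw [hi, Nat.sub_zero]
        exact pow_dvd_pow p (le_min hir his)
      have : (φ g) ^ (p ^ (min r s - 0)) = 1 := orderOf_dvd_iff_pow_eq_one.mp hdvd
      exact this
  | succ k ih =>
      intro g
      have hstep := descent hp φ hc k (min r s - k) ih (φ g) (hP g)
      rw [psiIter_comm] at hstep
      have : min r s - k - 1 = min r s - (k + 1) := by omega
      rwa [this] at hstep

/-- Binomial expansion of powers of a central automorphism. -/
private lemma pow_apply_formula (u : G ≃* G) (φ : G →* G)
    (hφ : ∀ x : G, u x = x * φ x) (hc : ∀ x : G, φ x ∈ Subgroup.center G)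
    (n : ℕ) (x : G) :
    (u ^ n) x = x * ((∏ k ∈ Finset.range n,
      ((φ.codRestrict (Subgroup.center G) hc).comp (psiIter φ k) x)
        ^ (Nat.choose n (k+1)) : Subgroup.center G) : G) := by
  set χ : G →* Subgroup.center G := φ.codRestrict (Subgroup.center G) hc with hχ
  set η : ℕ → G →* Subgroup.center G := fun k => χ.comp (psiIter φ k) with hη
  have hηcoe : ∀ k x, ((η k x : Subgroup.center G) : G) = psiIter φ (k+1) x := fun k x => rfl
  induction n generalizing x with
  | zero => simp
  | succ n ih =>
      rw [pow_succ, MulAut.mul_apply, ih (u x)]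
      have hstep : ∀ k, η k (u x) = η k x * η (k+1) x := by
        intro k
        have h1 : psiIter φ k (u x) = psiIter φ k x * psiIter φ (k+1) x := by
          rw [hφ x, map_mul, psiIter_comm]
        apply Subtype.ext
        push_cast [hηcoe]
        rw [psiIter_succ_apply, psiIter_succ_apply, h1, map_mul]
        rfl
      have hux : u x = x * ((η 0 x : Subgroup.center G) : G) := hφ x
      simp_rw [fun k => show (χ.comp (psiIter φ k)) (u x) =
        (χ.comp (psiIter φ k)) x * (χ.comp (psiIter φ (k+1))) x from hstep k, mul_pow, Finset.prod_mul_distrib]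
      rw [hux, mul_assoc, ← Subgroup.coe_mul]
      congr 2
      -- equality in the commutative group ↥(center G)
      simp_rw [Nat.choose_succ_succ, pow_add, Finset.prod_mul_distrib]
      rw [Finset.prod_range_succ']
      rw [Finset.prod_range_succ (fun k => (η k x) ^ (Nat.choose n (k+1))), Nat.choose_succ_self,
        pow_zero, mul_one, Nat.choose_zero_right, pow_one]
      simp only [hη, MonoidHom.comp_apply]
      simp [mul_comm, mul_assoc, mul_left_comm]

end Main

/-- **Proposition 3.1(c).** Let `G` be a finite `p`-group and `S = Z(G) ∩ P(G)`. Then the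
exponent of `Aut_S(G)` is at most `p ^ min r s`, where `exp(G/[G,G]) = p ^ r` and
`exp(Z(G)) = p ^ s`. -/
theorem autSub_exponent_le (p r s : ℕ) (hp : p.Prime) (G : Type*) [Group G] [Finite G]
    (hG : IsPGroup p G)
    (hr : Monoid.exponent (G ⧸ commutator G) = p ^ r)
    (hs : Monoid.exponent ↥(Subgroup.center G) = p ^ s) :
    Monoid.exponent ↥(autSub (Subgroup.center G ⊓ groupP p G)) ≤ p ^ min r s := by
  set m := min r s with hm
  refine Nat.le_of_dvd (pow_pos hp.pos m) (Monoid.exponent_dvd_of_forall_pow_eq_one ?_)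
  rintro ⟨u, hu⟩
  have hu' : ∀ x : G, x⁻¹ * u x ∈ Subgroup.center G ⊓ groupP p G := hu
  -- bundle the map x ↦ x⁻¹ * u x as a monoid hom
  have hzc : ∀ a : G, ∀ w : G, w * (a⁻¹ * u a) = (a⁻¹ * u a) * w := fun a w =>
    Subgroup.mem_center_iff.mp (Subgroup.mem_inf.mp (hu' a)).1 w
  set φ : G →* G :=
    { toFun := fun y => y⁻¹ * u y
      map_one' := by simp
      map_mul' := fun a b => by
        show (a * b)⁻¹ * u (a * b) = (a⁻¹ * u a) * (b⁻¹ * u b)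
        rw [map_mul, mul_inv_rev]
        calc b⁻¹ * a⁻¹ * (u a * u b) = b⁻¹ * (a⁻¹ * u a) * u b := by
              rw [mul_assoc, mul_assoc, mul_assoc]
          _ = (a⁻¹ * u a) * b⁻¹ * u b := by rw [hzc a b⁻¹]
          _ = (a⁻¹ * u a) * (b⁻¹ * u b) := by rw [mul_assoc] } with hφdef
  have hc : ∀ x : G, φ x ∈ Subgroup.center G := fun x => (Subgroup.mem_inf.mp (hu' x)).1
  have hP : ∀ x : G, φ x ∈ groupP p G := fun x => (Subgroup.mem_inf.mp (hu' x)).2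
  have hφ : ∀ x : G, u x = x * φ x := fun x => (mul_inv_cancel_left x (u x)).symm
  rw [Subtype.ext_iff]
  push_cast
  show u ^ (p ^ m) = 1
  ext x
  show (u ^ (p ^ m)) x = x
  rw [pow_apply_formula u φ hφ hc]
  have hprod : (∏ k ∈ Finset.range (p ^ m),
      ((φ.codRestrict (Subgroup.center G) hc).comp (psiIter φ k) x)
        ^ (Nat.choose (p ^ m) (k+1)) : Subgroup.center G) = 1 := by
    apply Finset.prod_eq_one
    intro k hk
    have h1 : (psiIter φ (k+1) x) ^ (p ^ (m - k)) = 1 :=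
      iter_bound hp hr hs φ hc hP k x
    have h2 : p ^ (m - k) ∣ Nat.choose (p ^ m) (k+1) := by
      have := nt_pow_dvd_choose hp m (k+1) (by omega)
      simpa using this
    have h3 : (psiIter φ (k+1) x) ^ (Nat.choose (p ^ m) (k+1)) = 1 :=
      orderOf_dvd_iff_pow_eq_one.mp ((orderOf_dvd_of_pow_eq_one h1).trans h2)
    apply Subtype.ext
    push_cast
    exact h3
  rw [hprod]
  simp
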